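/- Let μ be a finite random cluster measure on a box with bond intensity a function p : E → [0,1], and let two measures μ₀ and μ₁ differ only in the intensity s assigned to a fixed subset Ξ of bonds (s = 0 vs s = p). Then for any event J, log μ₁(J) − log μ₀(J) = ∑_{b∈Ξ} ∫₀^p (1/(s(1−s)))·(μ_s(J·ω_b)/μ_s(J) − μ_s(ω_b)) ds, where μ_s is the measure with intensity s on Ξ. -/

import Mathlib

open scoped BigOperators

/-- Unnormalized random cluster weight with bond intensities `pb`, cluster
weight `q` and cluster-count function `c`. -/
noncomputable def rcWeight {E : Type*} [Fintype E] (pb : E → ℝ) (q : ℝ)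
    (c : (E → Bool) → ℕ) (ω : E → Bool) : ℝ :=
  (∏ b : E, if ω b then pb b else 1 - pb b) * q ^ c ω

/-- Bond intensities equal to `s` on `Ξ` and `p` elsewhere. -/
def rcIntens {E : Type*} [DecidableEq E] (Ξ : Finset E) (p s : ℝ) : E → ℝ :=
  fun b => if b ∈ Ξ then s else p

/-- Partition function. -/
noncomputable def rcZ {E : Type*} [Fintype E] [DecidableEq E] (pb : E → ℝ) (q : ℝ)
    (c : (E → Bool) → ℕ) : ℝ :=
  ∑ ω : E → Bool, rcWeight pb q c ω

/-- Random cluster probability of the event `J`. -/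
noncomputable def rcProb {E : Type*} [Fintype E] [DecidableEq E] (pb : E → ℝ) (q : ℝ)
    (c : (E → Bool) → ℕ) (J : Finset (E → Bool)) : ℝ :=
  (∑ ω ∈ J, rcWeight pb q c ω) / rcZ pb q c

section Aux

variable {E : Type*} [Fintype E] [DecidableEq E] (Ξ : Finset E) (p q : ℝ)
  (c : (E → Bool) → ℕ)

/-- constant (in `s`) part of the weight -/
noncomputable def rcK (ω : E → Bool) : ℝ :=
  (∏ b ∈ Ξᶜ, if ω b then p else 1 - p) * q ^ c ω

/-- weight with factor `b` removed -/
noncomputable def rcWb (b : E) (s : ℝ) (ω : E → Bool) : ℝ :=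
  (∏ b' ∈ Ξ.erase b, if ω b' then s else 1 - s) * rcK Ξ p q c ω

noncomputable def rcW (S : Finset (E → Bool)) (s : ℝ) : ℝ :=
  ∑ ω ∈ S, rcWeight (rcIntens Ξ p s) q c ω

noncomputable def rcV (b : E) (S : Finset (E → Bool)) (s : ℝ) : ℝ :=
  ∑ ω ∈ S.filter (fun ω => ω b = true), rcWb Ξ p q c b s ω

noncomputable def rcN (b : E) (S : Finset (E → Bool)) (s : ℝ) : ℝ :=
  ∑ ω ∈ S.filter (fun ω => ¬ (ω b = true)), rcWb Ξ p q c b s ω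

lemma weight_eq (s : ℝ) (ω : E → Bool) :
    rcWeight (rcIntens Ξ p s) q c ω =
      (∏ b ∈ Ξ, if ω b then s else 1 - s) * rcK Ξ p q c ω := by
  unfold rcWeight rcK rcIntens
  rw [← Finset.prod_mul_prod_compl Ξ, mul_assoc]
  congr 1
  · exact Finset.prod_congr rfl fun b hb => by simp [hb]
  · congr 1
    exact Finset.prod_congr rfl fun b hb => by
      simp [Finset.mem_compl.mp hb]

lemma weight_split {b : E} (hb : b ∈ Ξ) (s : ℝ) (ω : E → Bool) :
    rcWeight (rcIntens Ξ p s) q c ω =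
      (if ω b then s else 1 - s) * rcWb Ξ p q c b s ω := by
  rw [weight_eq, rcWb, ← mul_assoc,
    ← Finset.mul_prod_erase Ξ (fun b' => if ω b' then s else 1 - s) hb]

lemma rcK_pos (hp0 : 0 < p) (hp1 : p < 1) (hq : 1 ≤ q) (ω : E → Bool) :
    0 < rcK Ξ p q c ω := by
  apply mul_pos
  · exact Finset.prod_pos fun b _ => by split <;> linarith
  · positivity

end Aux

section Aux2

variable {E : Type*} [Fintype E] [DecidableEq E] (Ξ : Finset E) (p q : ℝ)
  (c : (E → Bool) → ℕ)

lemma hderiv_weight (s : ℝ) (ω : E → Bool) :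
    HasDerivAt (fun s => rcWeight (rcIntens Ξ p s) q c ω)
      (∑ b ∈ Ξ, (if ω b then 1 else -1) * rcWb Ξ p q c b s ω) s := by
  simp only [weight_eq]
  have h : ∀ b ∈ Ξ, HasDerivAt (fun s => if ω b then s else (1 : ℝ) - s)
      (if ω b then 1 else -1) s := by
    intro b _
    by_cases hb : ω b = true <;> simp only [hb, if_true, if_false]
    · exact hasDerivAt_id s
    · simpa using (hasDerivAt_id s).const_sub 1
  have := (HasDerivAt.fun_finsetProd h).mul_const (rcK Ξ p q c ω)
  refine this.congr_deriv (Eq.symm ?_)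
  rw [Finset.sum_mul]
  refine Finset.sum_congr rfl fun b _ => ?_
  simp only [smul_eq_mul, rcWb]
  ring

lemma hderiv_W (S : Finset (E → Bool)) (s : ℝ) :
    HasDerivAt (rcW Ξ p q c S)
      (∑ b ∈ Ξ, (rcV Ξ p q c b S s - rcN Ξ p q c b S s)) s := by
  have h := HasDerivAt.fun_sum (fun ω (_ : ω ∈ S) => hderiv_weight Ξ p q c s ω)
  have : rcW Ξ p q c S = fun s => ∑ ω ∈ S, rcWeight (rcIntens Ξ p s) q c ω := rfl
  rw [this]
  refine h.congr_deriv (Eq.symm ?_)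
  rw [Finset.sum_comm]
  refine Finset.sum_congr rfl fun b _ => ?_
  rw [rcV, rcN, ← Finset.sum_filter_add_sum_filter_not S (fun ω => ω b = true)
    (fun ω => (if ω b then 1 else -1) * rcWb Ξ p q c b s ω)]
  rw [sub_eq_add_neg, ← Finset.sum_neg_distrib]
  congr 1
  · exact Finset.sum_congr rfl fun ω hω => by
      simp [(Finset.mem_filter.mp hω).2]
  · exact Finset.sum_congr rfl fun ω hω => by
      have := (Finset.mem_filter.mp hω).2
      simp only [Bool.not_eq_true] at this
      simp [this]

lemma W_split {b : E} (hb : b ∈ Ξ) (S : Finset (E → Bool)) (s : ℝ) :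
    rcW Ξ p q c S s = s * rcV Ξ p q c b S s + (1 - s) * rcN Ξ p q c b S s := by
  rw [rcW, rcV, rcN, Finset.mul_sum, Finset.mul_sum,
    ← Finset.sum_filter_add_sum_filter_not S (fun ω => ω b = true)]
  congr 1
  · exact Finset.sum_congr rfl fun ω hω => by
      rw [weight_split Ξ p q c hb, if_pos (Finset.mem_filter.mp hω).2]
  · exact Finset.sum_congr rfl fun ω hω => by
      have := (Finset.mem_filter.mp hω).2
      simp only [Bool.not_eq_true] at this
      rw [weight_split Ξ p q c hb, this]
      simp

end Aux2

section Aux3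

variable {E : Type*} [Fintype E] [DecidableEq E] (Ξ : Finset E) {p q : ℝ}
  (c : (E → Bool) → ℕ)

lemma weight_nonneg (hp0 : 0 < p) (hp1 : p < 1) (hq : 1 ≤ q) {s : ℝ}
    (hs0 : 0 ≤ s) (hs1 : s ≤ 1) (ω : E → Bool) :
    0 ≤ rcWeight (rcIntens Ξ p s) q c ω := by
  rw [weight_eq]
  apply mul_nonneg
  · exact Finset.prod_nonneg fun b _ => by split <;> linarith
  · exact le_of_lt (rcK_pos Ξ p q c hp0 hp1 hq ω)

lemma W_pos (hp0 : 0 < p) (hp1 : p < 1) (hq : 1 ≤ q) {J : Finset (E → Bool)}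
    (hpos : 0 < rcW Ξ p q c J 0) {s : ℝ} (hs0 : 0 ≤ s) (hs1 : s < 1) :
    0 < rcW Ξ p q c J s := by
  obtain ⟨ω₀, hω₀J, hω₀⟩ := Finset.exists_lt_of_sum_lt
    (by simpa [rcW] using hpos : ∑ ω ∈ J, (0:ℝ) < ∑ ω ∈ J, rcWeight (rcIntens Ξ p 0) q c ω)
  have hfalse : ∀ b ∈ Ξ, ω₀ b = false := by
    intro b hb
    by_contra hbne
    have hbt : ω₀ b = true := by
      cases h : ω₀ b
      · exact absurd h hbne
      · rfl
    rw [weight_split Ξ p q c hb, hbt] at hω₀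
    simp at hω₀
  have hws : 0 < rcWeight (rcIntens Ξ p s) q c ω₀ := by
    rw [weight_eq]
    apply mul_pos
    · apply Finset.prod_pos
      intro b hb
      rw [hfalse b hb]
      simp only [Bool.false_eq_true, if_false]
      linarith
    · exact rcK_pos Ξ p q c hp0 hp1 hq ω₀
  calc 0 < rcWeight (rcIntens Ξ p s) q c ω₀ := hws
    _ ≤ rcW Ξ p q c J s := Finset.single_le_sum
        (fun ω _ => weight_nonneg Ξ c hp0 hp1 hq hs0 (le_of_lt hs1) ω) hω₀J

lemma W_le_Z (hp0 : 0 < p) (hp1 : p < 1) (hq : 1 ≤ q) (J : Finset (E → Bool))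
    {s : ℝ} (hs0 : 0 ≤ s) (hs1 : s ≤ 1) :
    rcW Ξ p q c J s ≤ rcW Ξ p q c Finset.univ s :=
  Finset.sum_le_sum_of_subset_of_nonneg (Finset.subset_univ J)
    (fun ω _ _ => weight_nonneg Ξ c hp0 hp1 hq hs0 hs1 ω)

lemma cont_W (S : Finset (E → Bool)) : Continuous (rcW Ξ p q c S) :=
  continuous_iff_continuousAt.mpr fun s => (hderiv_W Ξ p q c S s).continuousAt

lemma cont_V (b : E) (S : Finset (E → Bool)) :
    Continuous (fun s => rcV Ξ p q c b S s) := by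
  apply continuous_finset_sum
  intro ω _
  apply Continuous.mul _ continuous_const
  apply continuous_finset_prod
  intro b' _
  by_cases h : ω b' = true <;>
    simp only [h, Bool.false_eq_true, if_true, if_false] <;> fun_prop

end Aux3

lemma per_term {V N W s : ℝ} (hW : W ≠ 0) (hs : (1:ℝ) - s ≠ 0)
    (h : W = s * V + (1 - s) * N) :
    (V - N) / W = V / ((1 - s) * W) - 1 / (1 - s) := by
  rw [h] at hW ⊢
  field_simp
  rw [div_sub_one (by rw [mul_comm V, mul_comm N]; exact hW)]
  ring

lemma filter_sum {E : Type*} [Fintype E] [DecidableEq E] (Ξ : Finset E) (p q : ℝ)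
    (c : (E → Bool) → ℕ) {b : E} (hb : b ∈ Ξ) (S : Finset (E → Bool)) (s : ℝ) :
    rcW Ξ p q c (S.filter (fun ω => ω b = true)) s = s * rcV Ξ p q c b S s := by
  rw [rcW, rcV, Finset.mul_sum]
  exact Finset.sum_congr rfl fun ω hω => by
    rw [weight_split Ξ p q c hb, if_pos (Finset.mem_filter.mp hω).2]


/-- Interpolation of boundary conditions: for the random cluster measures μ_s
with intensity s on the boundary bonds Ξ and p elsewhere,
log μ_p(J) − log μ_0(J) = ∑_{b∈Ξ} ∫₀^p (1/(s(1−s)))·(μ_s(J, ω_b)/μ_s(J) − μ_s(ω_b)) ds. -/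
theorem stmt18 {E : Type*} [Fintype E] [DecidableEq E] (Ξ : Finset E) (p q : ℝ)
    (hp0 : 0 < p) (hp1 : p < 1) (hq : 1 ≤ q)
    (c : (E → Bool) → ℕ) (J : Finset (E → Bool))
    (hpos : 0 < ∑ ω ∈ J, rcWeight (rcIntens Ξ p 0) q c ω) :
    Real.log (rcProb (rcIntens Ξ p p) q c J) - Real.log (rcProb (rcIntens Ξ p 0) q c J) =
      ∑ b ∈ Ξ, ∫ s in (0 : ℝ)..p, (1 / (s * (1 - s))) *
        (rcProb (rcIntens Ξ p s) q c (J.filter fun ω => ω b = true) /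
            rcProb (rcIntens Ξ p s) q c J -
          rcProb (rcIntens Ξ p s) q c (Finset.univ.filter fun ω => ω b = true)) := by
  have hposW : 0 < rcW Ξ p q c J 0 := hpos
  -- positivity on [0,p]
  have hWJpos : ∀ s ∈ Set.Icc (0:ℝ) p, 0 < rcW Ξ p q c J s := fun s hs =>
    W_pos Ξ c hp0 hp1 hq hposW hs.1 (lt_of_le_of_lt hs.2 hp1)
  have hWUpos : ∀ s ∈ Set.Icc (0:ℝ) p, 0 < rcW Ξ p q c Finset.univ s := fun s hs =>
    lt_of_lt_of_le (hWJpos s hs)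
      (W_le_Z Ξ c hp0 hp1 hq J hs.1 (le_of_lt (lt_of_le_of_lt hs.2 hp1)))
  have h1s : ∀ s ∈ Set.Icc (0:ℝ) p, (1:ℝ) - s ≠ 0 := fun s hs => by
    have := lt_of_le_of_lt hs.2 hp1; intro h; linarith
  have hZeq : ∀ s : ℝ, rcZ (rcIntens Ξ p s) q c = rcW Ξ p q c Finset.univ s := fun s => rfl
  have hProb : ∀ (s : ℝ) (S : Finset (E → Bool)),
      rcProb (rcIntens Ξ p s) q c S = rcW Ξ p q c S s / rcW Ξ p q c Finset.univ s :=
    fun s S => rfl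
  -- the regularized integrand
  set h : E → ℝ → ℝ := fun b s =>
    rcV Ξ p q c b J s / ((1 - s) * rcW Ξ p q c J s) -
      rcV Ξ p q c b Finset.univ s / ((1 - s) * rcW Ξ p q c Finset.univ s) with hh
  set G : ℝ → ℝ := fun s => Real.log (rcW Ξ p q c J s) - Real.log (rcW Ξ p q c Finset.univ s)
    with hG
  have hIcc : Set.uIcc (0:ℝ) p = Set.Icc 0 p := Set.uIcc_of_le hp0.le
  -- derivative of G
  have hGd : ∀ s ∈ Set.Icc (0:ℝ) p, HasDerivAt G (∑ b ∈ Ξ, h b s) s := by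
    intro s hs
    have hJ := (hderiv_W Ξ p q c J s).log (ne_of_gt (hWJpos s hs))
    have hU := (hderiv_W Ξ p q c Finset.univ s).log (ne_of_gt (hWUpos s hs))
    have hd := hJ.sub hU
    refine hd.congr_deriv (Eq.symm ?_)
    rw [Finset.sum_div, Finset.sum_div, ← Finset.sum_sub_distrib]
    refine Finset.sum_congr rfl fun b hb => ?_
    rw [hh]
    rw [per_term (ne_of_gt (hWJpos s hs)) (h1s s hs) (W_split Ξ p q c hb J s),
      per_term (ne_of_gt (hWUpos s hs)) (h1s s hs) (W_split Ξ p q c hb Finset.univ s)]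
    ring
  -- continuity of each h b on [0,p]
  have hcont : ∀ b ∈ Ξ, ContinuousOn (h b) (Set.Icc (0:ℝ) p) := by
    intro b _
    apply ContinuousOn.sub
    · exact (cont_V Ξ c b J).continuousOn.div
        (((continuous_const.sub continuous_id).mul (cont_W Ξ c J)).continuousOn)
        (fun s hs => mul_ne_zero (h1s s hs) (ne_of_gt (hWJpos s hs)))
    · exact (cont_V Ξ c b Finset.univ).continuousOn.div
        (((continuous_const.sub continuous_id).mul (cont_W Ξ c Finset.univ)).continuousOn)
        (fun s hs => mul_ne_zero (h1s s hs) (ne_of_gt (hWUpos s hs)))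
  have hint : ∀ b ∈ Ξ, IntervalIntegrable (h b) MeasureTheory.volume 0 p := by
    intro b hb
    exact ((hcont b hb).mono (by rw [hIcc])).intervalIntegrable
  -- FTC
  have hFTC : ∫ s in (0:ℝ)..p, (∑ b ∈ Ξ, h b s) = G p - G 0 := by
    apply intervalIntegral.integral_eq_sub_of_hasDerivAt
    · intro s hs
      exact hGd s (hIcc ▸ hs)
    · apply ContinuousOn.intervalIntegrable
      rw [hIcc]
      exact continuousOn_finset_sum Ξ hcont
  -- swap sum and integral
  have hswap : ∑ b ∈ Ξ, (∫ s in (0:ℝ)..p, h b s) = ∫ s in (0:ℝ)..p, (∑ b ∈ Ξ, h b s) :=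
    (intervalIntegral.integral_finset_sum hint).symm
  -- h = integrand on Ioc 0 p
  have hcongr : ∀ b ∈ Ξ, (∫ s in (0:ℝ)..p, (1 / (s * (1 - s))) *
        (rcProb (rcIntens Ξ p s) q c (J.filter fun ω => ω b = true) /
            rcProb (rcIntens Ξ p s) q c J -
          rcProb (rcIntens Ξ p s) q c (Finset.univ.filter fun ω => ω b = true)))
      = ∫ s in (0:ℝ)..p, h b s := by
    intro b hb
    apply intervalIntegral.integral_congr_ae
    apply Filter.Eventually.of_forall
    intro s hs
    rw [Set.uIoc_of_le hp0.le] at hs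
    have hsIcc : s ∈ Set.Icc (0:ℝ) p := ⟨hs.1.le, hs.2⟩
    have hs0 : s ≠ 0 := ne_of_gt hs.1
    have hWJ := ne_of_gt (hWJpos s hsIcc)
    have hWU := ne_of_gt (hWUpos s hsIcc)
    have h1 := h1s s hsIcc
    rw [hProb, hProb, hProb, filter_sum Ξ p q c hb J s, filter_sum Ξ p q c hb Finset.univ s, hh]
    field_simp
  -- assemble
  have hL1 : Real.log (rcProb (rcIntens Ξ p p) q c J) = G p := by
    rw [hProb, Real.log_div (ne_of_gt (hWJpos p ⟨hp0.le, le_refl p⟩))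
      (ne_of_gt (hWUpos p ⟨hp0.le, le_refl p⟩))]
  have hL0 : Real.log (rcProb (rcIntens Ξ p 0) q c J) = G 0 := by
    rw [hProb, Real.log_div (ne_of_gt (hWJpos 0 ⟨le_refl 0, hp0.le⟩))
      (ne_of_gt (hWUpos 0 ⟨le_refl 0, hp0.le⟩))]
  rw [hL1, hL0, ← hFTC, ← hswap]
  exact (Finset.sum_congr rfl hcongr).symm
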